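/- For every n ≥ 2 there exists a unique unital K-algebra homomorphism F_n : TLhat_n(q) → TLhat_{n+1}(q) such that F_n(t_{σ_i}) = g_{σ_i} for all 1 ≤ i ≤ n−1 and F_n(t_{a_n}) = g_{σ_n}·g_{a_{n+1}}·g_{σ_n}^{−1}. -/

import Mathlib

namespace AffineTL

open FreeAlgebra

/-- Cyclic successor on `Fin m`. -/
def csucc {m : ℕ} (i : Fin m) : Fin m := ⟨(i.val + 1) % m, Nat.mod_lt _ i.pos⟩

/-- The defining relations of the affine Temperley–Lieb algebra `TLhat_m(q)` with `m`
generators (indexed so that `g_{σ_i}` has index `i - 1` and `g_{a_m}` has index `m - 1`).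
For `m = 1` the unique generator is set to `0`, so that `TLhat_1(q) ≅ K`. -/
inductive ATLRel {K : Type*} [CommRing K] (q : K) (m : ℕ) :
    FreeAlgebra K (Fin m) → FreeAlgebra K (Fin m) → Prop
  | degen (h : m ≤ 1) (i : Fin m) : ATLRel q m (ι K i) 0
  | quad (h : 2 ≤ m) (i : Fin m) :
      ATLRel q m (ι K i * ι K i) ((q - 1) • ι K i + algebraMap K _ q)
  | comm (h : 3 ≤ m) (i j : Fin m) (h1 : i ≠ j) (h2 : j ≠ csucc i) (h3 : i ≠ csucc j) :
      ATLRel q m (ι K i * ι K j) (ι K j * ι K i)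
  | braid (h : 3 ≤ m) (i : Fin m) :
      ATLRel q m (ι K i * ι K (csucc i) * ι K i) (ι K (csucc i) * ι K i * ι K (csucc i))
  | vrel (h : 3 ≤ m) (i : Fin m) :
      ATLRel q m (ι K i * ι K (csucc i) * ι K i + ι K i * ι K (csucc i) + ι K (csucc i) * ι K i
        + ι K i + ι K (csucc i) + 1) 0

/-- The affine Temperley–Lieb algebra `TLhat_m(q)` of type `Ã`. -/
abbrev ATL (K : Type*) [CommRing K] (q : K) (m : ℕ) : Type _ := RingQuot (ATLRel q m)

/-- The generators of `TLhat_m(q)`. -/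
noncomputable def g {K : Type*} [CommRing K] (q : K) (m : ℕ) (i : Fin m) : ATL K q m :=
  RingQuot.mkAlgHom K (ATLRel q m) (ι K i)

/-- The defining relations of the type `A` Temperley–Lieb algebra `TL_n(q)` with `n`
generators (`g_{σ_i}` has index `i - 1`). -/
inductive TLARel {K : Type*} [CommRing K] (q : K) (n : ℕ) :
    FreeAlgebra K (Fin n) → FreeAlgebra K (Fin n) → Prop
  | quad (i : Fin n) :
      TLARel q n (ι K i * ι K i) ((q - 1) • ι K i + algebraMap K _ q)
  | comm (i j : Fin n) (h : i.val + 2 ≤ j.val ∨ j.val + 2 ≤ i.val) :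
      TLARel q n (ι K i * ι K j) (ι K j * ι K i)
  | braid (i j : Fin n) (h : j.val = i.val + 1) :
      TLARel q n (ι K i * ι K j * ι K i) (ι K j * ι K i * ι K j)
  | vrel (i j : Fin n) (h : j.val = i.val + 1) :
      TLARel q n (ι K i * ι K j * ι K i + ι K i * ι K j + ι K j * ι K i
        + ι K i + ι K j + 1) 0

/-- The type `A` Temperley–Lieb algebra `TL_n(q)`. -/
abbrev TLA (K : Type*) [CommRing K] (q : K) (n : ℕ) : Type _ := RingQuot (TLARel q n)

/-- The generators of `TL_n(q)`. -/
noncomputable def gA {K : Type*} [CommRing K] (q : K) (n : ℕ) (i : Fin n) : TLA K q n :=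
  RingQuot.mkAlgHom K (TLARel q n) (ι K i)

/-- The formal inverse `q⁻¹·(x − (q−1))` of an element satisfying `x² = (q−1)x + q`. -/
noncomputable def qinv {K : Type*} [CommRing K] (q : K) {A : Type*} [Ring A] [Algebra K A]
    (x : A) : A :=
  Ring.inverse q • (x - algebraMap K A (q - 1))

/-- A trace on a `K`-algebra: a `K`-linear form vanishing on commutators. -/
def IsTrace {K : Type*} [CommRing K] {A : Type*} [Ring A] [Algebra K A]
    (τ : A →ₗ[K] K) : Prop :=
  ∀ x y : A, τ (x * y) = τ (y * x)

/-- The element `G = g_{σ_n}⋯g_{σ_1}·g_{a_{n+1}}` of `TLhat_{n+1}(q)`. -/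
noncomputable def bigG {K : Type*} [CommRing K] (q : K) (n : ℕ) : ATL K q (n + 1) :=
  (List.ofFn fun j : Fin n => g q (n + 1) ⟨n - 1 - j.val, by omega⟩).prod *
    g q (n + 1) (Fin.last n)

/-- The inverse `G⁻¹ = g_{a_{n+1}}⁻¹·g_{σ_1}⁻¹⋯g_{σ_n}⁻¹` of `bigG`. -/
noncomputable def bigGinv {K : Type*} [CommRing K] (q : K) (n : ℕ) : ATL K q (n + 1) :=
  qinv q (g q (n + 1) (Fin.last n)) *
    (List.ofFn fun j : Fin n => qinv q (g q (n + 1) j.castSucc)).prod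

end AffineTL

namespace AffineTLAux

open AffineTL

section Aux
variable {K : Type*} [CommRing K] {A : Type*} [Ring A] [Algebra K A] (q : K)

lemma mul_qinv {x : A} (hq : IsUnit q) (hx : x * x = (q - 1) • x + algebraMap K A q) :
    x * qinv q x = 1 := by
  have h1 : x * (x - algebraMap K A (q - 1)) = algebraMap K A q := by
    rw [mul_sub, hx, ← Algebra.commutes, ← Algebra.smul_def]; abel
  rw [qinv, mul_smul_comm, h1, Algebra.algebraMap_eq_smul_one, smul_smul,
    Ring.inverse_mul_cancel _ hq, one_smul]

lemma qinv_mul {x : A} (hq : IsUnit q) (hx : x * x = (q - 1) • x + algebraMap K A q) :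
    qinv q x * x = 1 := by
  have h1 : (x - algebraMap K A (q - 1)) * x = algebraMap K A q := by
    rw [sub_mul, hx, ← Algebra.smul_def]; abel
  rw [qinv, smul_mul_assoc, h1, Algebra.algebraMap_eq_smul_one, smul_smul,
    Ring.inverse_mul_cancel _ hq, one_smul]

lemma comm_qinv {x y : A} (h : y * x = x * y) : y * qinv q x = qinv q x * y := by
  rw [qinv, mul_smul_comm, smul_mul_assoc, mul_sub, sub_mul, h, Algebra.commutes]

lemma key_e {x y : A} (hx : x * x = (q - 1) • x + algebraMap K A q) :
    (x + 1) * (y + 1) * (x + 1) =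
      (x * y * x + x * y + y * x + x + y + 1) + q • (x + 1) := by
  have h2 : (x+1) * (y+1) * (x+1) = x*y*x + x*y + y*x + y + x*x + (x + x) + 1 := by
    noncomm_ring
  rw [h2, hx, Algebra.algebraMap_eq_smul_one]
  module

lemma vrel_of_e {x y : A} (hx : x * x = (q - 1) • x + algebraMap K A q)
    (h : (x + 1) * (y + 1) * (x + 1) = q • (x + 1)) :
    x * y * x + x * y + y * x + x + y + 1 = 0 := by
  have := key_e q hx (y := y)
  rw [h] at this
  exact (right_eq_add.mp this)

lemma e_of_vrel {x y : A} (hx : x * x = (q - 1) • x + algebraMap K A q)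
    (h : x * y * x + x * y + y * x + x + y + 1 = 0) :
    (x + 1) * (y + 1) * (x + 1) = q • (x + 1) := by
  rw [key_e q hx, h, zero_add]

/-- The conjugate satisfies the quadratic relation. -/
lemma quad_conj {t a I : A} (hti : t * I = 1) (hit : I * t = 1)
    (ha : a * a = (q - 1) • a + algebraMap K A q) :
    (t * a * I) * (t * a * I) = (q - 1) • (t * a * I) + algebraMap K A q := by
  have h1 : (t * a * I) * (t * a * I) = t * (a * ((I * t) * (a * I))) := by
    simp only [mul_assoc]
  rw [h1, hit, one_mul, show a * (a * I) = (a * a) * I from (mul_assoc a a I).symm, ha,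
    add_mul, smul_mul_assoc, Algebra.commutes, mul_add, mul_smul_comm, ← mul_assoc,
    ← mul_assoc, hti, one_mul]

/-- Elements commuting with `t` and `a` commute with the conjugate. -/
lemma comm_conj {t a I y : A} (hyt : y * t = t * y) (hya : y * a = a * y)
    (hyI : y * I = I * y) : y * (t * a * I) = (t * a * I) * y := by
  simp only [mul_assoc]
  rw [← mul_assoc y t, hyt, mul_assoc, ← mul_assoc y a, hya, mul_assoc, hyI]

/-- The braid relation between `s` and the conjugate `t * a * t⁻¹`. -/
lemma braid_conj {s t a I J : A} (hti : t * I = 1) (hit : I * t = 1)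
    (hsJ : s * J = 1)
    (hst : s * t * s = t * s * t) (hta : t * a * t = a * t * a)
    (has : a * s = s * a) (haJ : a * J = J * a) :
    s * (t * a * I) * s = (t * a * I) * s * (t * a * I) := by
  have pt3 : ∀ {x1 x2 x3 y1 y2 y3 : A}, x1 * x2 * x3 = y1 * y2 * y3 →
      ∀ z, x1 * (x2 * (x3 * z)) = y1 * (y2 * (y3 * z)) := by
    intro x1 x2 x3 y1 y2 y3 h z
    simpa [mul_assoc] using congrArg (· * z) h
  have pt2 : ∀ {x1 x2 y1 y2 : A}, x1 * x2 = y1 * y2 →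
      ∀ z, x1 * (x2 * z) = y1 * (y2 * z) := by
    intro x1 x2 y1 y2 h z
    simpa [mul_assoc] using congrArg (· * z) h
  have e1 : ∀ z, I * (s * (t * (s * z))) = s * (t * z) := by
    intro z
    have h1 := pt3 hst z
    rw [h1, ← mul_assoc, hit, one_mul]
  have L1p : ∀ z, I * (s * (t * z)) = s * (t * (J * z)) := by
    intro z
    have hz : z = s * (J * z) := by rw [← mul_assoc, hsJ, one_mul]
    calc I * (s * (t * z)) = I * (s * (t * (s * (J * z)))) := by rw [← hz]
      _ = s * (t * (J * z)) := e1 _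
  have hasp := pt2 has
  have hsap : ∀ z, s * (a * z) = a * (s * z) := fun z => (hasp z).symm
  have haJp := pt2 haJ
  have hJap : ∀ z, J * (a * z) = a * (J * z) := fun z => (haJp z).symm
  have htap : ∀ z, a * (t * (a * z)) = t * (a * (t * z)) := fun z => (pt3 hta z).symm
  have hstp : ∀ z, t * (s * (t * z)) = s * (t * (s * z)) := fun z => (pt3 hst z).symm
  have key : t * (a * (I * (s * (t * (a * I))))) = s * (t * (a * (I * s))) := by
    calc t * (a * (I * (s * (t * (a * I)))))
        = t * (a * (s * (t * (J * (a * I))))) := by rw [L1p]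
      _ = t * (s * (a * (t * (J * (a * I))))) := by rw [hasp]
      _ = t * (s * (a * (t * (a * (J * I))))) := by rw [hJap]
      _ = t * (s * (t * (a * (t * (J * I))))) := by rw [htap]
      _ = s * (t * (s * (a * (t * (J * I))))) := by rw [hstp]
      _ = s * (t * (a * (s * (t * (J * I))))) := by rw [hsap]
      _ = s * (t * (a * (I * (s * (t * I))))) := by rw [L1p]
      _ = s * (t * (a * (I * s))) := by rw [hti, mul_one]
  simp only [mul_assoc]
  exact key.symm

/-- Braid relation between the conjugate and `z`. -/
lemma braid_conj' {t a I z : A} (hit : I * t = 1)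
    (hzt : z * t = t * z) (hzI : z * I = I * z)
    (haz : a * z * a = z * a * z) :
    (t * a * I) * z * (t * a * I) = z * (t * a * I) * z := by
  have pt3 : ∀ {x1 x2 x3 y1 y2 y3 : A}, x1 * x2 * x3 = y1 * y2 * y3 →
      ∀ w, x1 * (x2 * (x3 * w)) = y1 * (y2 * (y3 * w)) := by
    intro x1 x2 x3 y1 y2 y3 h w
    simpa [mul_assoc] using congrArg (· * w) h
  have pt2 : ∀ {x1 x2 y1 y2 : A}, x1 * x2 = y1 * y2 →
      ∀ w, x1 * (x2 * w) = y1 * (y2 * w) := by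
    intro x1 x2 y1 y2 h w
    simpa [mul_assoc] using congrArg (· * w) h
  have hzIp := pt2 hzI
  have hIzp : ∀ w, I * (z * w) = z * (I * w) := fun w => (hzIp w).symm
  have hitp : ∀ w, I * (t * w) = w := by
    intro w; rw [← mul_assoc, hit, one_mul]
  have hazp := pt3 haz
  have htzp : ∀ w, t * (z * w) = z * (t * w) := fun w => (pt2 hzt w).symm
  simp only [mul_assoc]
  calc t * (a * (I * (z * (t * (a * I)))))
      = t * (a * (z * (I * (t * (a * I))))) := by rw [hIzp]
    _ = t * (a * (z * (a * I))) := by rw [hitp]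
    _ = t * (z * (a * (z * I))) := by rw [hazp]
    _ = z * (t * (a * (z * I))) := by rw [htzp]
    _ = z * (t * (a * (I * z))) := by rw [hzI]

/-- V3 : the v-relation between the conjugate `X = t a t⁻¹` and `z`. -/
lemma vrel_conj' {t a z : A} (hq : IsUnit q)
    (ht : t * t = (q - 1) • t + algebraMap K A q)
    (ha : a * a = (q - 1) • a + algebraMap K A q)
    (hzt : z * t = t * z)
    (hvaz : a * z * a + a * z + z * a + a + z + 1 = 0) :
    (t * a * qinv q t) * z * (t * a * qinv q t) + (t * a * qinv q t) * z
      + z * (t * a * qinv q t) + (t * a * qinv q t) + z + 1 = 0 := by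
  set I := qinv q t with hIdef
  have hti : t * I = 1 := mul_qinv q hq ht
  have hit : I * t = 1 := qinv_mul q hq ht
  have hX : (t*a*I) * (t*a*I) = (q-1) • (t*a*I) + algebraMap K A q :=
    quad_conj q hti hit ha
  apply vrel_of_e q hX
  have hX1 : t*a*I + 1 = t * (a+1) * I := by
    rw [show t * (a+1) * I = t * ((a+1) * I) from mul_assoc _ _ _, add_mul, one_mul,
      mul_add, ← mul_assoc, hti]
  rw [hX1]
  have heaz : (a+1) * (z+1) * (a+1) = q • (a+1) := e_of_vrel q ha hvaz
  have hezt : (z+1) * t = t * (z+1) := by rw [add_mul, one_mul, mul_add, mul_one, hzt]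
  have hezI : (z+1) * I = I * (z+1) := comm_qinv q hezt
  have hIez : ∀ w, I * ((z+1) * w) = (z+1) * (I * w) := by
    intro w; rw [← mul_assoc, ← hezI, mul_assoc]
  have hitp : ∀ w, I * (t * w) = w := by intro w; rw [← mul_assoc, hit, one_mul]
  have heazp : ∀ w, (a+1) * ((z+1) * ((a+1) * w)) = q • ((a+1) * w) := by
    intro w
    simpa only [mul_assoc, smul_mul_assoc] using congrArg (· * w) heaz
  calc t * (a+1) * I * (z+1) * (t * (a+1) * I)
      = t * ((a+1) * (I * ((z+1) * (t * ((a+1) * I))))) := by simp only [mul_assoc]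
    _ = t * ((a+1) * ((z+1) * (I * (t * ((a+1) * I))))) := by rw [hIez]
    _ = t * ((a+1) * ((z+1) * ((a+1) * I))) := by rw [hitp]
    _ = t * (q • ((a+1) * I)) := by rw [heazp]
    _ = q • (t * (a+1) * I) := by rw [mul_smul_comm, mul_assoc]

/-- V2 : the v-relation between `s` and the conjugate `X = t a t⁻¹`. -/
lemma vrel_conj {s t a : A} (hq : IsUnit q)
    (hs : s * s = (q - 1) • s + algebraMap K A q)
    (ht : t * t = (q - 1) • t + algebraMap K A q)
    (has : a * s = s * a)
    (hvst : s * t * s + s * t + t * s + s + t + 1 = 0)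
    (hvta : t * a * t + t * a + a * t + t + a + 1 = 0) :
    s * (t * a * qinv q t) * s + s * (t * a * qinv q t)
      + (t * a * qinv q t) * s + s + (t * a * qinv q t) + 1 = 0 := by
  set I := qinv q t with hIdef
  have hti : t * I = 1 := mul_qinv q hq ht
  apply vrel_of_e q hs
  have hX1 : t*a*I + 1 = t * ((a+1) * I) := by
    rw [add_mul, one_mul, mul_add, ← mul_assoc, hti]
  rw [show (s + 1) * (t * a * I + 1) * (s + 1) = (s+1) * ((t*a*I + 1) * (s+1)) from
    mul_assoc _ _ _, hX1]
  set es := s + 1 with hes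
  set ea := a + 1 with hea
  have hest : es * (t+1) * es = q • es := e_of_vrel q hs hvst
  have heta : (t+1) * ea * (t+1) = q • (t+1) := e_of_vrel q ht hvta
  have heas : ea * es = es * ea := by
    rw [hea, hes]
    simp only [mul_add, add_mul, mul_one, one_mul, has]
    abel
  have hese : es * es = (q+1) • es := by
    have h1 : es * es = s*s + (s + s + 1) := by rw [hes]; noncomm_ring
    rw [h1, hs, Algebra.algebraMap_eq_smul_one, hes]
    module
  set r := Ring.inverse q with hr
  set c := algebraMap K A q with hc
  have hI : I = r • ((t+1) - c) := by
    rw [hIdef, qinv, hc, map_sub, map_one, hr]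
    congr 1
    abel
  have step1 : t * (ea * I) = r • (t * (ea * ((t+1) - c))) := by
    rw [hI, mul_smul_comm, mul_smul_comm]
  rw [step1, smul_mul_assoc, mul_smul_comm]
  have hM : es * ((t * (ea * ((t+1) - c))) * es) =
      es*((t+1)*(ea*((t+1)*es))) - es*((t+1)*(ea*(c*es))) - es*(ea*((t+1)*es))
        + es*(ea*(c*es)) := by
    noncomm_ring
  rw [hM]
  have hest' : es * ((t+1) * es) = q • es := by rw [← mul_assoc]; exact hest
  have hestp : ∀ w, es * ((t+1) * (es * w)) = q • (es * w) := by
    intro w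
    simpa only [mul_assoc, smul_mul_assoc] using congrArg (· * w) hest
  have hetap : ∀ w, (t+1) * (ea * ((t+1) * w)) = q • ((t+1) * w) := by
    intro w
    simpa only [mul_assoc, smul_mul_assoc] using congrArg (· * w) heta
  have hces : c * es = q • es := (Algebra.smul_def q es).symm
  have m1 : es*((t+1)*(ea*((t+1)*es))) = (q*q) • es := by
    rw [hetap, mul_smul_comm, hest', smul_smul]
  have m2 : es*((t+1)*(ea*(c*es))) = (q*q) • (es*ea) := by
    rw [hces, mul_smul_comm, mul_smul_comm, mul_smul_comm, heas, hestp, smul_smul]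
  have m3 : es*(ea*((t+1)*es)) = q • (es*ea) := by
    calc es*(ea*((t+1)*es)) = ea*(es*((t+1)*es)) := by
          rw [← mul_assoc, ← heas, mul_assoc]
      _ = ea*(q • es) := by rw [hest']
      _ = q • (es*ea) := by rw [mul_smul_comm, heas]
  have m4 : es*(ea*(c*es)) = (q*(q+1)) • (es*ea) := by
    rw [hces, mul_smul_comm, mul_smul_comm, ← mul_assoc, ← heas, mul_assoc, hese,
      mul_smul_comm, heas, smul_smul]
  rw [m1, m2, m3, m4]
  have hrq : r * q = 1 := Ring.inverse_mul_cancel q hq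
  have goalscalar : ∀ u v : A,
      r • ((q*q) • u - (q*q) • v - q • v + (q*(q+1)) • v) = q • u := by
    intro u v
    match_scalars
    · linear_combination q * hrq
    · ring
  exact goalscalar es (es*ea)

end Aux

section Rels

variable {K : Type*} [CommRing K] (q : K) {m : ℕ}

lemma g_quad (h : 2 ≤ m) (i : Fin m) :
    g q m i * g q m i = (q - 1) • g q m i + algebraMap K (ATL K q m) q := by
  have := RingQuot.mkAlgHom_rel K (ATLRel.quad (q := q) h i)
  simpa only [g, map_mul, map_add, map_smul, AlgHom.commutes] using this

lemma g_comm (h : 3 ≤ m) (i j : Fin m) (h1 : i ≠ j) (h2 : j ≠ csucc i) (h3 : i ≠ csucc j) :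
    g q m i * g q m j = g q m j * g q m i := by
  have := RingQuot.mkAlgHom_rel K (ATLRel.comm (q := q) h i j h1 h2 h3)
  simpa only [g, map_mul] using this

lemma g_braid (h : 3 ≤ m) (i : Fin m) :
    g q m i * g q m (csucc i) * g q m i
      = g q m (csucc i) * g q m i * g q m (csucc i) := by
  have := RingQuot.mkAlgHom_rel K (ATLRel.braid (q := q) h i)
  simpa only [g, map_mul] using this

lemma g_vrel (h : 3 ≤ m) (i : Fin m) :
    g q m i * g q m (csucc i) * g q m i + g q m i * g q m (csucc i)
      + g q m (csucc i) * g q m i + g q m i + g q m (csucc i) + 1 = 0 := by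
  have := RingQuot.mkAlgHom_rel K (ATLRel.vrel (q := q) h i)
  simpa only [g, map_mul, map_add, map_one, map_zero] using this

end Rels

/-- The images of the generators under `F_n`. -/
noncomputable def Fgen {K : Type*} [CommRing K] (q : K) (n : ℕ) (i : Fin n) :
    ATL K q (n + 1) :=
  if h : (i : ℕ) < n - 1 then g q (n + 1) ⟨i, by omega⟩
  else g q (n + 1) ⟨n - 1, by omega⟩ * g q (n + 1) ⟨n, by omega⟩ *
    qinv q (g q (n + 1) ⟨n - 1, by omega⟩)

end AffineTLAux

open AffineTL in
/-- for every `n ≥ 2` there is a unique unital `K`-algebra homomorphism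
`F_n : TLhat_n(q) → TLhat_{n+1}(q)` with `F_n(t_{σ_i}) = g_{σ_i}` for `1 ≤ i ≤ n−1` and
`F_n(t_{a_n}) = g_{σ_n}·g_{a_{n+1}}·g_{σ_n}⁻¹`. -/
theorem statement0 {K : Type*} [CommRing K] [IsDomain K] [CharZero K]
    (q sq : K) (hsq : sq * sq = q) (hq : IsUnit q) (hq1 : IsUnit (q + 1))
    (n : ℕ) (hn : 2 ≤ n) :
    ∃! F : ATL K q n →ₐ[K] ATL K q (n + 1),
      (∀ i : ℕ, ∀ hi : i < n - 1,
          F (g q n ⟨i, by omega⟩) = g q (n + 1) ⟨i, by omega⟩) ∧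
      F (g q n ⟨n - 1, by omega⟩) =
        g q (n + 1) ⟨n - 1, by omega⟩ * g q (n + 1) ⟨n, by omega⟩ *
          qinv q (g q (n + 1) ⟨n - 1, by omega⟩) := by
  classical
  open AffineTLAux FreeAlgebra in
  -- abbreviations
  have h3 : (3 : ℕ) ≤ n + 1 := by omega
  set t : ATL K q (n+1) := g q (n+1) ⟨n - 1, by omega⟩ with ht_def
  set aa : ATL K q (n+1) := g q (n+1) ⟨n, by omega⟩ with haa_def
  -- csucc computations
  have hcs : ∀ (k : ℕ) (hk : k < n),
      csucc (⟨k, by omega⟩ : Fin (n+1)) = ⟨k+1, by omega⟩ := by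
    intro k hk
    apply Fin.ext
    show (k + 1) % (n + 1) = k + 1
    exact Nat.mod_eq_of_lt (by omega)
  have hcs0 : csucc (⟨n, by omega⟩ : Fin (n+1)) = ⟨0, by omega⟩ := by
    apply Fin.ext
    show (n + 1) % (n + 1) = 0
    exact Nat.mod_self _
  have hcsn : ∀ {nn : ℕ} (k : ℕ) (hk2 : k + 1 < nn) (hk : k < nn),
      csucc (⟨k, hk⟩ : Fin nn) = ⟨k+1, hk2⟩ := by
    intro nn k hk2 hk
    apply Fin.ext
    show (k + 1) % nn = k + 1
    exact Nat.mod_eq_of_lt (by omega)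
  have hquad : ∀ i : Fin (n+1), g q (n+1) i * g q (n+1) i
      = (q - 1) • g q (n+1) i + algebraMap K _ q := g_quad q (by omega)
  have gcomm : ∀ (i j : Fin (n+1)), (i : ℕ) ≠ j → (j : ℕ) ≠ ((i : ℕ)+1) % (n+1) →
      (i : ℕ) ≠ ((j : ℕ)+1) % (n+1) →
      g q (n+1) i * g q (n+1) j = g q (n+1) j * g q (n+1) i := by
    intro i j h1 h2 h3'
    refine g_comm q (by omega) i j ?_ ?_ ?_
    · exact fun e => h1 (congrArg Fin.val e)
    · exact fun e => h2 (congrArg Fin.val e)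
    · exact fun e => h3' (congrArg Fin.val e)
  -- key facts about t, aa
  have hquadt : t * t = (q - 1) • t + algebraMap K _ q := hquad _
  have hti : t * qinv q t = 1 := mul_qinv q hq hquadt
  have hit : qinv q t * t = 1 := qinv_mul q hq hquadt
  set X : ATL K q (n+1) := t * aa * qinv q t with hX_def
  -- the defining map on generators
  set f : Fin n → ATL K q (n+1) := Fgen q n with hf_def
  have hf_lt : ∀ (i : Fin n), (i : ℕ) < n - 1 → f i = g q (n+1) ⟨i, by omega⟩ := by
    intro i hi
    rw [hf_def, Fgen, dif_pos hi]
  have hf_ge : ∀ (i : Fin n), ¬ ((i : ℕ) < n - 1) → f i = X := by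
    intro i hi
    rw [hf_def, Fgen, dif_neg hi]
  -- checking the relations
  have hrel : ∀ ⦃x y : FreeAlgebra K (Fin n)⦄, ATLRel q n x y →
      (FreeAlgebra.lift K f) x = (FreeAlgebra.lift K f) y := by
    intro x y hxy
    induction hxy with
    | degen h i => omega
    | quad h i =>
      simp only [map_mul, map_add, map_smul, AlgHom.commutes, FreeAlgebra.lift_ι_apply]
      by_cases h' : (i : ℕ) < n - 1
      · rw [hf_lt i h']; exact hquad _
      · rw [hf_ge i h']; exact quad_conj q hti hit (hquad _)
    | comm h i j h1 h2 h3' =>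
      simp only [map_mul, FreeAlgebra.lift_ι_apply]
      obtain ⟨iv, hi⟩ := i
      obtain ⟨jv, hj⟩ := j
      have hh1 : iv ≠ jv := fun e => h1 (Fin.ext e)
      have hh2 : jv ≠ (iv + 1) % n := fun e => h2 (Fin.ext e)
      have hh3 : iv ≠ (jv + 1) % n := fun e => h3' (Fin.ext e)
      by_cases hi' : iv < n - 1 <;> by_cases hj' : jv < n - 1
      · -- both ordinary generators
        rw [hf_lt _ hi', hf_lt _ hj']
        refine gcomm _ _ (by simpa using hh1) ?_ ?_
        · show jv ≠ (iv + 1) % (n + 1)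
          rw [Nat.mod_eq_of_lt (by omega)]
          rw [Nat.mod_eq_of_lt (by omega : iv + 1 < n)] at hh2
          exact hh2
        · show iv ≠ (jv + 1) % (n + 1)
          rw [Nat.mod_eq_of_lt (by omega)]
          rw [Nat.mod_eq_of_lt (by omega : jv + 1 < n)] at hh3
          exact hh3
      · -- j is the affine generator
        have hjv : jv = n - 1 := by omega
        rw [hf_lt _ hi', hf_ge _ hj']
        have hiv2 : iv ≠ n - 2 := by
          intro e
          apply hh2
          rw [e, Nat.mod_eq_of_lt (by omega : n - 2 + 1 < n)]
          omega
        have hiv0 : iv ≠ 0 := by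
          intro e
          apply hh3
          rw [e, hjv, show n - 1 + 1 = n from by omega, Nat.mod_self]
        have hyt : g q (n+1) ⟨iv, by omega⟩ * t = t * g q (n+1) ⟨iv, by omega⟩ := by
          refine gcomm _ _ ?_ ?_ ?_
          · show iv ≠ n - 1; omega
          · show n - 1 ≠ (iv + 1) % (n + 1); rw [Nat.mod_eq_of_lt (by omega)]; omega
          · show iv ≠ (n - 1 + 1) % (n + 1)
            rw [show n - 1 + 1 = n from by omega, Nat.mod_eq_of_lt (by omega)]; omega
        have hya : g q (n+1) ⟨iv, by omega⟩ * aa = aa * g q (n+1) ⟨iv, by omega⟩ := by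
          refine gcomm _ _ ?_ ?_ ?_
          · show iv ≠ n; omega
          · show (n : ℕ) ≠ (iv + 1) % (n + 1); rw [Nat.mod_eq_of_lt (by omega)]; omega
          · show iv ≠ (n + 1) % (n + 1); rw [Nat.mod_self]; omega
        exact comm_conj hyt hya (comm_qinv q hyt)
      · -- i is the affine generator
        have hiv : iv = n - 1 := by omega
        rw [hf_ge _ hi', hf_lt _ hj']
        have hjv2 : jv ≠ n - 2 := by
          intro e
          apply hh3
          rw [e, Nat.mod_eq_of_lt (by omega : n - 2 + 1 < n)]
          omega
        have hjv0 : jv ≠ 0 := by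
          intro e
          apply hh2
          rw [e, hiv, show n - 1 + 1 = n from by omega, Nat.mod_self]
        have hyt : g q (n+1) ⟨jv, by omega⟩ * t = t * g q (n+1) ⟨jv, by omega⟩ := by
          refine gcomm _ _ ?_ ?_ ?_
          · show jv ≠ n - 1; omega
          · show n - 1 ≠ (jv + 1) % (n + 1); rw [Nat.mod_eq_of_lt (by omega)]; omega
          · show jv ≠ (n - 1 + 1) % (n + 1)
            rw [show n - 1 + 1 = n from by omega, Nat.mod_eq_of_lt (by omega)]; omega
        have hya : g q (n+1) ⟨jv, by omega⟩ * aa = aa * g q (n+1) ⟨jv, by omega⟩ := by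
          refine gcomm _ _ ?_ ?_ ?_
          · show jv ≠ n; omega
          · show (n : ℕ) ≠ (jv + 1) % (n + 1); rw [Nat.mod_eq_of_lt (by omega)]; omega
          · show jv ≠ (n + 1) % (n + 1); rw [Nat.mod_self]; omega
        exact (comm_conj hyt hya (comm_qinv q hyt)).symm
      · omega
    | braid h i =>
      simp only [map_mul, FreeAlgebra.lift_ι_apply]
      obtain ⟨iv, hi⟩ := i
      rcases show iv < n - 2 ∨ iv = n - 2 ∨ iv = n - 1 from by omega with h' | h' | h'
      · rw [hcsn iv (by omega), hf_lt _ (by show iv < n - 1; omega), hf_lt _ (by show iv + 1 < n - 1; omega)]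
        have := g_braid q (by omega) (⟨iv, by omega⟩ : Fin (n+1))
        rwa [hcs iv (by omega)] at this
      · subst h'
        rw [hcsn (n-2) (by omega), hf_lt _ (by show n - 2 < n - 1; omega),
          hf_ge _ (by show ¬ (n - 2 + 1 < n - 1); omega)]
        have hst : g q (n+1) ⟨n-2, by omega⟩ * t * g q (n+1) ⟨n-2, by omega⟩
            = t * g q (n+1) ⟨n-2, by omega⟩ * t := by
          have := g_braid q (by omega) (⟨n-2, by omega⟩ : Fin (n+1))
          rwa [hcsn (n-2) (by omega), show (⟨n-2+1, by omega⟩ : Fin (n+1)) = ⟨n-1, by omega⟩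
            from Fin.ext (show n - 2 + 1 = n - 1 by omega)] at this
        have hta : t * aa * t = aa * t * aa := by
          have := g_braid q (by omega) (⟨n-1, by omega⟩ : Fin (n+1))
          rwa [hcsn (n-1) (by omega), show (⟨n-1+1, by omega⟩ : Fin (n+1)) = ⟨n, by omega⟩
            from Fin.ext (show n - 1 + 1 = n by omega)] at this
        have has : aa * g q (n+1) ⟨n-2, by omega⟩ = g q (n+1) ⟨n-2, by omega⟩ * aa := by
          refine gcomm _ _ ?_ ?_ ?_
          · show (n : ℕ) ≠ n - 2; omega
          · show n - 2 ≠ (n + 1) % (n + 1); rw [Nat.mod_self]; omega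
          · show (n : ℕ) ≠ (n - 2 + 1) % (n + 1); rw [Nat.mod_eq_of_lt (by omega)]; omega
        exact braid_conj hti hit
          (mul_qinv q hq (hquad _)) hst hta has (comm_qinv q has)
      · subst h'
        have hc0 : csucc (⟨n-1, hi⟩ : Fin n) = ⟨0, by omega⟩ := by
          apply Fin.ext
          show (n - 1 + 1) % n = 0
          rw [show n - 1 + 1 = n from by omega, Nat.mod_self]
        rw [hc0, hf_ge _ (by show ¬ (n - 1 < n - 1); omega), hf_lt _ (by show 0 < n - 1; omega)]
        set z : ATL K q (n+1) := g q (n+1) ⟨0, by omega⟩ with hz_def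
        have hzt : z * t = t * z := by
          refine gcomm _ _ ?_ ?_ ?_
          · show (0 : ℕ) ≠ n - 1; omega
          · show n - 1 ≠ (0 + 1) % (n + 1); rw [Nat.mod_eq_of_lt (by omega)]; omega
          · show (0 : ℕ) ≠ (n - 1 + 1) % (n + 1); rw [Nat.mod_eq_of_lt (by omega)]; omega
        have haz : aa * z * aa = z * aa * z := by
          have := g_braid q (by omega) (⟨n, by omega⟩ : Fin (n+1))
          rwa [hcs0] at this
        exact braid_conj' hit hzt (comm_qinv q hzt) haz
    | vrel h i =>
      simp only [map_add, map_mul, map_one, map_zero, FreeAlgebra.lift_ι_apply]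
      obtain ⟨iv, hi⟩ := i
      rcases show iv < n - 2 ∨ iv = n - 2 ∨ iv = n - 1 from by omega with h' | h' | h'
      · rw [hcsn iv (by omega), hf_lt _ (by show iv < n - 1; omega), hf_lt _ (by show iv + 1 < n - 1; omega)]
        have := g_vrel q (by omega) (⟨iv, by omega⟩ : Fin (n+1))
        rwa [hcs iv (by omega)] at this
      · subst h'
        rw [hcsn (n-2) (by omega), hf_lt _ (by show n - 2 < n - 1; omega),
          hf_ge _ (by show ¬ (n - 2 + 1 < n - 1); omega)]
        have hvst : g q (n+1) ⟨n-2, by omega⟩ * t * g q (n+1) ⟨n-2, by omega⟩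
            + g q (n+1) ⟨n-2, by omega⟩ * t + t * g q (n+1) ⟨n-2, by omega⟩
            + g q (n+1) ⟨n-2, by omega⟩ + t + 1 = 0 := by
          have := g_vrel q (by omega) (⟨n-2, by omega⟩ : Fin (n+1))
          rwa [hcsn (n-2) (by omega), show (⟨n-2+1, by omega⟩ : Fin (n+1)) = ⟨n-1, by omega⟩
            from Fin.ext (show n - 2 + 1 = n - 1 by omega)] at this
        have hvta : t * aa * t + t * aa + aa * t + t + aa + 1 = 0 := by
          have := g_vrel q (by omega) (⟨n-1, by omega⟩ : Fin (n+1))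
          rwa [hcsn (n-1) (by omega), show (⟨n-1+1, by omega⟩ : Fin (n+1)) = ⟨n, by omega⟩
            from Fin.ext (show n - 1 + 1 = n by omega)] at this
        have has : aa * g q (n+1) ⟨n-2, by omega⟩ = g q (n+1) ⟨n-2, by omega⟩ * aa := by
          refine gcomm _ _ ?_ ?_ ?_
          · show (n : ℕ) ≠ n - 2; omega
          · show n - 2 ≠ (n + 1) % (n + 1); rw [Nat.mod_self]; omega
          · show (n : ℕ) ≠ (n - 2 + 1) % (n + 1); rw [Nat.mod_eq_of_lt (by omega)]; omega
        exact vrel_conj q hq (hquad _) hquadt has hvst hvta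
      · subst h'
        have hc0 : csucc (⟨n-1, hi⟩ : Fin n) = ⟨0, by omega⟩ := by
          apply Fin.ext
          show (n - 1 + 1) % n = 0
          rw [show n - 1 + 1 = n from by omega, Nat.mod_self]
        rw [hc0, hf_ge _ (by show ¬ (n - 1 < n - 1); omega), hf_lt _ (by show 0 < n - 1; omega)]
        set z : ATL K q (n+1) := g q (n+1) ⟨0, by omega⟩ with hz_def
        have hzt : z * t = t * z := by
          refine gcomm _ _ ?_ ?_ ?_
          · show (0 : ℕ) ≠ n - 1; omega
          · show n - 1 ≠ (0 + 1) % (n + 1); rw [Nat.mod_eq_of_lt (by omega)]; omega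
          · show (0 : ℕ) ≠ (n - 1 + 1) % (n + 1); rw [Nat.mod_eq_of_lt (by omega)]; omega
        have hvaz : aa * z * aa + aa * z + z * aa + aa + z + 1 = 0 := by
          have := g_vrel q (by omega) (⟨n, by omega⟩ : Fin (n+1))
          rwa [hcs0] at this
        exact vrel_conj' q hq hquadt (hquad _) hzt hvaz
  -- the homomorphism
  set F : ATL K q n →ₐ[K] ATL K q (n+1) :=
    RingQuot.liftAlgHom K ⟨FreeAlgebra.lift K f, hrel⟩ with hF_def
  have hFg : ∀ i : Fin n, F (g q n i) = f i := by
    intro i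
    show F (RingQuot.mkAlgHom K (ATLRel q n) (ι K i)) = f i
    rw [hF_def, RingQuot.liftAlgHom_mkAlgHom_apply, FreeAlgebra.lift_ι_apply]
  have ex1 : ∀ i : ℕ, ∀ hi : i < n - 1,
      F (g q n ⟨i, by omega⟩) = g q (n + 1) ⟨i, by omega⟩ := by
    intro i hi
    rw [hFg ⟨i, by omega⟩, hf_lt _ (by simpa using hi)]
  have ex2 : F (g q n ⟨n - 1, by omega⟩) = X := by
    rw [hFg ⟨n - 1, by omega⟩, hf_ge _ (by show ¬ (n - 1 < n - 1); omega)]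
  refine ⟨F, ⟨ex1, ex2⟩, ?_⟩
  rintro F' ⟨u1, u2⟩
  have hcomp : F'.comp (RingQuot.mkAlgHom K (ATLRel q n))
      = F.comp (RingQuot.mkAlgHom K (ATLRel q n)) := by
    apply FreeAlgebra.hom_ext
    funext i
    obtain ⟨iv, hi⟩ := i
    show F' (RingQuot.mkAlgHom K (ATLRel q n) (ι K ⟨iv, hi⟩))
      = F (RingQuot.mkAlgHom K (ATLRel q n) (ι K ⟨iv, hi⟩))
    show F' (g q n ⟨iv, hi⟩) = F (g q n ⟨iv, hi⟩)
    by_cases h' : iv < n - 1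
    · rw [u1 iv h', ex1 iv h']
    · have e : (⟨iv, hi⟩ : Fin n) = ⟨n - 1, by omega⟩ :=
        Fin.ext (show iv = n - 1 by omega)
      rw [e, u2, ex2]
  apply AlgHom.ext
  intro x
  obtain ⟨y, rfl⟩ := RingQuot.mkAlgHom_surjective K (ATLRel q n) x
  exact DFunLike.congr_fun hcomp y
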